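/- Let K ≥ 1 be an integer, λ > 0 a real, and for each k = 1,…,K let m_k ≥ 1, n_k ≥ m_k be integers, μ_k > 0 a real, and φ_k : [0,∞) → ℝ be defined by φ_k(0) = 0 and φ_k(t) = t·B_{m_k,n_k}(t/μ_k) for t > 0. Then the problem of minimizing ∑_{k=1}^K φ_k(λ_k) over vectors (λ_1,…,λ_K) with λ_k ∈ [0,λ] for each k and ∑_{k=1}^K λ_k = λ has a minimizer, and the minimizer is unique. -/

import Mathlib

/-- `a_j(r)` coefficients of the M/M/m/n queue. -/
noncomputable def aCoef (m j : ℕ) (r : ℝ) : ℝ :=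
  if j ≤ m then r ^ j / (Nat.factorial j : ℝ)
  else (r ^ m / (Nat.factorial m : ℝ)) * (r / (m : ℝ)) ^ (j - m)

/-- Blocking probability `B_{m,n}(r)` of the M/M/m/n queue with offered load `r`. -/
noncomputable def Bmn (m n : ℕ) (r : ℝ) : ℝ :=
  aCoef m n r / ∑ j ∈ Finset.range (n + 1), aCoef m j r

/-- Mean number in system `L_{m,n}(r)` of the M/M/m/n queue with offered load `r`. -/
noncomputable def Lmn (m n : ℕ) (r : ℝ) : ℝ :=
  (∑ j ∈ Finset.range (n + 1), (j : ℝ) * aCoef m j r) /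
    ∑ j ∈ Finset.range (n + 1), aCoef m j r

/-- Erlang-B formula `B_m(r)`. -/
noncomputable def erlangB (m : ℕ) (r : ℝ) : ℝ :=
  (r ^ m / (Nat.factorial m : ℝ)) / ∑ j ∈ Finset.range (m + 1), r ^ j / (Nat.factorial j : ℝ)

noncomputable def cc (m j : ℕ) : ℝ :=
  if j ≤ m then 1 / (Nat.factorial j : ℝ) else 1 / ((Nat.factorial m : ℝ) * (m : ℝ) ^ (j - m))

lemma cc_pos (m : ℕ) (hm : 1 ≤ m) (j : ℕ) : 0 < cc m j := by
  unfold cc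
  split
  · positivity
  · have hmpos : (0:ℝ) < (m:ℝ) := by exact_mod_cast hm
    have : (0:ℝ) < (Nat.factorial m : ℝ) := by exact_mod_cast Nat.factorial_pos m
    positivity

lemma aCoef_eq (m j : ℕ) (r : ℝ) : aCoef m j r = cc m j * r ^ j := by
  unfold aCoef cc
  split
  · ring
  · rename_i h
    have hmj : m ≤ j := le_of_not_ge h
    rw [div_pow, ← pow_sub_mul_pow r hmj]
    field_simp

lemma cc_succ (m : ℕ) (hm : 1 ≤ m) (j : ℕ) : cc m j = cc m (j+1) * (min (j+1) m : ℕ) := by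
  have hfj : ((Nat.factorial j : ℝ)) ≠ 0 := by exact_mod_cast (Nat.factorial_pos j).ne'
  have hfm : ((Nat.factorial m : ℝ)) ≠ 0 := by exact_mod_cast (Nat.factorial_pos m).ne'
  have hmR : ((m:ℝ)) ≠ 0 := by
    have : 0 < m := hm; exact_mod_cast this.ne'
  unfold cc
  rcases le_or_gt (j+1) m with h | h
  · rw [if_pos (Nat.le_of_succ_le h), if_pos h, min_eq_left h]
    rw [Nat.factorial_succ]
    push_cast
    field_simp
  · have hj1 : ¬ (j+1 ≤ m) := not_le.mpr h
    rw [if_neg hj1, min_eq_right (by omega)]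
    rcases le_or_gt j m with hjm | hjm
    · -- j = m
      have hjem : j = m := by omega
      subst hjem
      rw [if_pos le_rfl]
      have : j + 1 - j = 1 := by omega
      rw [this]
      field_simp
    · rw [if_neg (not_le.mpr hjm)]
      have h1 : j + 1 - m = (j - m) + 1 := by omega
      rw [h1, pow_succ]
      field_simp

variable {m n : ℕ}

lemma cc_logconcave (hm : 1 ≤ m) {i j : ℕ} (hij : i ≤ j) :
    cc m i * cc m (j+1) ≤ cc m (i+1) * cc m j := by
  rw [cc_succ m hm i, cc_succ m hm j]
  have h1 : ((min (i+1) m : ℕ) : ℝ) ≤ ((min (j+1) m : ℕ) : ℝ) := by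
    exact_mod_cast min_le_min (by omega) le_rfl
  have h2 := (cc_pos m hm (i+1)).le
  have h3 := (cc_pos m hm (j+1)).le
  nlinarith [cc_pos m hm (i+1), cc_pos m hm (j+1), mul_nonneg h2 h3]

lemma cc_spread (hm : 1 ≤ m) (s : ℕ) : ∀ q p, p ≤ q → 2*q ≤ s →
    cc m p * cc m (s - p) ≤ cc m q * cc m (s - q) := by
  intro q
  induction q with
  | zero => intro p hp _; interval_cases p; exact le_rfl
  | succ q ih =>
    intro p hp hq
    rcases Nat.lt_or_ge q p with h | h
    · have : p = q + 1 := by omega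
      subst this; exact le_rfl
    · have step : cc m q * cc m (s - q) ≤ cc m (q+1) * cc m (s - (q+1)) := by
        have hqs : q ≤ s - q - 1 := by omega
        have := cc_logconcave (m := m) hm (i := q) (j := s - q - 1)  hqs
        have e1 : s - q - 1 + 1 = s - q := by omega
        have e2 : s - (q+1) = s - q - 1 := by omega
        rw [e1] at this
        rw [e2]
        linarith [this]
      exact (ih p h (by omega)).trans step

-- product symmetry: for i ≤ s, weight of i equals weight of s-i
lemma w_symm (s i : ℕ) (hi : i ≤ s) :
    cc m i * cc m (s - i) = cc m (s - i) * cc m (s - (s - i)) := by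
  have : s - (s - i) = i := by omega
  rw [this]; ring

lemma key_mono (hm : 1 ≤ m) (s : ℕ) {i i' : ℕ} (hi : i ≤ s) (hi' : i' ≤ s)
    (h : i * (s - i) < i' * (s - i')) :
    cc m i * cc m (s - i) ≤ cc m i' * cc m (s - i') := by
  set p := min i (s - i) with hp
  set p' := min i' (s - i') with hp'
  have hps : p * (s - p) = i * (s - i) := by
    rcases min_cases i (s-i) with ⟨h1, h2⟩ | ⟨h1, h2⟩
    · rw [hp, h1]
    · rw [hp, h1]
      have e : s - (s - i) = i := by omega
      rw [e, Nat.mul_comm]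
  have hps' : p' * (s - p') = i' * (s - i') := by
    rcases min_cases i' (s-i') with ⟨h1, h2⟩ | ⟨h1, h2⟩
    · rw [hp', h1]
    · rw [hp', h1]
      have e : s - (s - i') = i' := by omega
      rw [e, Nat.mul_comm]
  have hpp : p < p' := by
    by_contra hc
    push_neg at hc
    -- p' ≤ p, both ≤ s/2 ⇒ p'(s-p') ≤ p(s-p)
    have h2p : 2*p ≤ s := by omega
    have h2p' : 2*p' ≤ s := by omega
    have : p' * (s - p') ≤ p * (s - p) := by
      have hc' : (p':ℤ) ≤ p := by exact_mod_cast hc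
      have h2pz : 2*(p:ℤ) ≤ s := by exact_mod_cast h2p
      have h2pz' : 2*(p':ℤ) ≤ s := by exact_mod_cast h2p'
      zify [show p ≤ s by omega, show p' ≤ s by omega]
      nlinarith [mul_nonneg (by linarith : (0:ℤ) ≤ (p:ℤ)-p') (by linarith : (0:ℤ) ≤ (s:ℤ)-p-p')]
    omega
  have hw : cc m i * cc m (s - i) = cc m p * cc m (s - p) := by
    rcases min_cases i (s-i) with ⟨h1, h2⟩ | ⟨h1, h2⟩
    · rw [hp, h1]
    · rw [hp, h1, w_symm s i hi]
  have hw' : cc m i' * cc m (s - i') = cc m p' * cc m (s - p') := by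
    rcases min_cases i' (s-i') with ⟨h1, h2⟩ | ⟨h1, h2⟩
    · rw [hp', h1]
    · rw [hp', h1, w_symm s i' hi']
  rw [hw, hw']
  exact cc_spread hm s p' p hpp.le (by omega)

open Finset

lemma sum_cast_id (N : ℕ) : ∑ i ∈ range N, (i:ℝ) = N*(N-1)/2 := by
  induction N with
  | zero => simp
  | succ N ih => rw [Finset.sum_range_succ, ih]; push_cast; ring

lemma sum_cast_sq (N : ℕ) : ∑ i ∈ range N, (i:ℝ)^2 = N*(N-1)*(2*N-1)/6 := by
  induction N with
  | zero => simp
  | succ N ih => rw [Finset.sum_range_succ, ih]; push_cast; ring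

-- the real-valued coefficient, as a function of i, for fixed n s
noncomputable def VV (n s : ℕ) (i : ℕ) : ℝ :=
  3*((n:ℝ)-i)*((n:ℝ)-((s:ℝ)-i)) - ((2*n:ℝ)-s)*((2*n:ℝ)-s-1)/2

lemma sum_VV_nonneg (n s : ℕ) (hs : s ≤ 2*n) :
    0 ≤ ∑ i ∈ Finset.Icc (s-n) (min s n), VV n s i := by
  rcases le_or_gt s n with h | h
  · have e0 : s - n = 0 := by omega
    have e1 : min s n = s := min_eq_left h
    rw [e0, e1]
    have : Finset.Icc 0 s = Finset.range (s+1) := by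
      ext i; simp [Nat.lt_succ_iff]
    rw [this]
    have hsum : ∑ i ∈ range (s+1), VV n s i = (s+1)*((n:ℝ)+1)*((n:ℝ)-s) := by
      unfold VV
      rw [Finset.sum_sub_distrib, Finset.sum_const]
      have expand : ∀ i ∈ range (s+1), 3*((n:ℝ)-i)*((n:ℝ)-((s:ℝ)-i))
          = 3*((n:ℝ)*(n-s)) + 3*(s:ℝ)*(i:ℝ) - 3*(i:ℝ)^2 := by
        intro i _; ring
      rw [Finset.sum_congr rfl expand]
      simp only [Finset.sum_sub_distrib, Finset.sum_add_distrib, Finset.sum_const,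
        ← Finset.mul_sum, sum_cast_id, sum_cast_sq, Finset.card_range, nsmul_eq_mul]
      push_cast
      ring
    rw [hsum]
    have h1 : (s:ℝ) ≤ n := by exact_mod_cast h
    have : (0:ℝ) ≤ (n:ℝ) - s := by linarith
    positivity
  · -- n ≤ s ≤ 2n : sum is zero
    have e1 : min s n = n := min_eq_right h.le
    rw [e1]
    have hle : s - n ≤ n := by omega
    rw [← Finset.Ico_add_one_right_eq_Icc, Finset.sum_Ico_eq_sum_range]
    have e2 : n + 1 - (s-n) = (2*n - s) + 1 := by omega
    rw [e2]
    set u := 2*n - s with hu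
    have hsum : ∑ a ∈ range (u+1), VV n s (s - n + a) = 0 := by
      have expand : ∀ a ∈ range (u+1), VV n s (s-n+a)
          = 3*(u:ℝ)*(a:ℝ) - 3*(a:ℝ)^2 - (u:ℝ)*((u:ℝ)-1)/2 := by
        intro a ha
        unfold VV
        have h1 : ((s - n + a : ℕ) : ℝ) = (s:ℝ) - n + a := by
          have : (n:ℕ) ≤ s := h.le
          push_cast [Nat.cast_sub this]
          ring
        have h2' : (s:ℝ) = 2*(n:ℝ) - (u:ℝ) := by
          rw [hu]; push_cast [Nat.cast_sub hs]; ring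
        rw [h1, h2']
        ring
      rw [Finset.sum_congr rfl expand]
      simp only [Finset.sum_sub_distrib, Finset.sum_const,
        ← Finset.mul_sum, sum_cast_id, sum_cast_sq, Finset.card_range, nsmul_eq_mul]
      push_cast
      ring
    rw [hsum]

lemma inner_nonneg (m n s : ℕ) (hm : 1 ≤ m) (hs : s ≤ 2*n) :
    0 ≤ ∑ i ∈ Finset.Icc (s-n) (min s n), (cc m i * cc m (s-i)) * VV n s i := by
  set W := Finset.Icc (s-n) (min s n) with hW
  have hmono : MonovaryOn (fun i => cc m i * cc m (s-i)) (VV n s) (W : Set ℕ) := by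
    intro i hi i' hi' hlt
    simp only [hW, Finset.coe_Icc, Set.mem_Icc] at hi hi'
    have his : i ≤ s := le_trans hi.2 (min_le_left _ _)
    have his' : i' ≤ s := le_trans hi'.2 (min_le_left _ _)
    apply key_mono hm s his his'
    -- from VV inequality to nat product inequality
    have hr : (i:ℝ)*((s:ℝ)-i) < (i':ℝ)*((s:ℝ)-i') := by
      have e : ∀ k : ℕ, VV n s k = 3*((k:ℝ)*((s:ℝ)-k)) + ((n:ℝ)*((n:ℝ)-s)*3 - ((2*n:ℝ)-s)*((2*n:ℝ)-s-1)/2) := by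
        intro k; unfold VV; ring
      rw [e i, e i'] at hlt
      linarith
    have c1 : ((i*(s-i):ℕ):ℝ) = (i:ℝ)*((s:ℝ)-i) := by push_cast [Nat.cast_sub his]; ring
    have c2 : ((i'*(s-i'):ℕ):ℝ) = (i':ℝ)*((s:ℝ)-i') := by push_cast [Nat.cast_sub his']; ring
    have : ((i*(s-i):ℕ):ℝ) < ((i'*(s-i'):ℕ):ℝ) := by rw [c1, c2]; exact hr
    exact_mod_cast this
  have cheb := hmono.sum_mul_sum_le_card_mul_sum
  have hw : 0 ≤ ∑ i ∈ W, cc m i * cc m (s-i) :=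
    Finset.sum_nonneg fun i _ => (mul_pos (cc_pos m hm i) (cc_pos m hm _)).le
  have hv : 0 ≤ ∑ i ∈ W, VV n s i := sum_VV_nonneg n s hs
  by_contra hcon
  push_neg at hcon
  rcases Nat.eq_zero_or_pos W.card with h0 | h0
  · rw [Finset.card_eq_zero] at h0
    rw [h0] at hcon
    simp at hcon
  · have hcard : (0:ℝ) < (W.card : ℝ) := by exact_mod_cast h0
    nlinarith [mul_nonneg hw hv, cheb]

noncomputable def PP (m n : ℕ) (r : ℝ) : ℝ := ∑ j ∈ range (n+1), cc m j * r^j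
noncomputable def SS1 (m n : ℕ) (r : ℝ) : ℝ := ∑ j ∈ range (n+1), cc m j * j * r^j
noncomputable def SS2 (m n : ℕ) (r : ℝ) : ℝ :=
  ∑ j ∈ range (n+1), cc m j * ((j:ℝ)*((j:ℝ)-1)) * r^j
noncomputable def FF (m n : ℕ) (r : ℝ) : ℝ :=
  (n:ℝ)*((n:ℝ)+1)*(PP m n r)^2 - 2*((n:ℝ)+1)*(SS1 m n r)*(PP m n r)
    + 2*(SS1 m n r)^2 - (PP m n r)*(SS2 m n r)

noncomputable def UU (n : ℕ) (i j : ℕ) : ℝ :=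
  (n:ℝ)*((n:ℝ)+1) - 2*((n:ℝ)+1)*(i:ℝ) + 2*(i:ℝ)*(j:ℝ) - (j:ℝ)*((j:ℝ)-1)

lemma FF_double (m n : ℕ) (r : ℝ) :
    FF m n r = ∑ i ∈ range (n+1), ∑ j ∈ range (n+1),
      cc m i * cc m j * r^(i+j) * UU n i j := by
  have e : ∀ f g : ℕ → ℝ, (∑ j ∈ range (n+1), f j) * (∑ j ∈ range (n+1), g j)
      = ∑ i ∈ range (n+1), ∑ j ∈ range (n+1), f i * g j :=
    fun f g => Finset.sum_mul_sum _ _ f g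
  unfold FF PP SS1 SS2
  rw [sq, sq, mul_assoc (2*((n:ℝ)+1)), e, e, e, e]
  simp only [Finset.mul_sum, ← Finset.sum_sub_distrib, ← Finset.sum_add_distrib]
  refine Finset.sum_congr rfl fun i _ => Finset.sum_congr rfl fun j _ => ?_
  rw [pow_add]
  unfold UU
  ring

lemma FF_sym (m n : ℕ) (r : ℝ) :
    FF m n r = ∑ i ∈ range (n+1), ∑ j ∈ range (n+1),
      cc m i * cc m j * r^(i+j) * VV n (i+j) i := by
  have swap : ∑ i ∈ range (n+1), ∑ j ∈ range (n+1), cc m i * cc m j * r^(i+j) * UU n j i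
      = ∑ i ∈ range (n+1), ∑ j ∈ range (n+1), cc m i * cc m j * r^(i+j) * UU n i j := by
    rw [Finset.sum_comm]
    refine Finset.sum_congr rfl fun i _ => Finset.sum_congr rfl fun j _ => ?_
    rw [Nat.add_comm j i]
    ring
  have h2 : (2:ℝ) * FF m n r = ∑ i ∈ range (n+1), ∑ j ∈ range (n+1),
      cc m i * cc m j * r^(i+j) * (UU n i j + UU n j i) := by
    rw [two_mul, FF_double m n r]
    nth_rewrite 2 [← swap]
    simp only [← Finset.sum_add_distrib]
    refine Finset.sum_congr rfl fun i _ => Finset.sum_congr rfl fun j _ => ?_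
    ring
  have key : ∀ i j : ℕ, UU n i j + UU n j i = 2 * VV n (i+j) i := by
    intro i j
    unfold UU VV
    push_cast
    ring
  have h3 : (2:ℝ) * FF m n r = 2 * ∑ i ∈ range (n+1), ∑ j ∈ range (n+1),
      cc m i * cc m j * r^(i+j) * VV n (i+j) i := by
    rw [h2, Finset.mul_sum]
    refine Finset.sum_congr rfl fun i _ => ?_
    rw [Finset.mul_sum]
    refine Finset.sum_congr rfl fun j _ => ?_
    rw [key i j]
    ring
  linarith

lemma FF_fiber (m n : ℕ) (r : ℝ) :
    FF m n r = ∑ s ∈ range (2*n+1),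
      r^s * ∑ i ∈ Finset.Icc (s-n) (min s n), (cc m i * cc m (s-i)) * VV n s i := by
  rw [FF_sym, ← Finset.sum_product']
  rw [← Finset.sum_fiberwise_of_maps_to (g := fun p : ℕ × ℕ => p.1 + p.2)
    (t := range (2*n+1)) (by
      intro p hp
      simp only [Finset.mem_product, Finset.mem_range] at hp ⊢
      omega)]
  refine Finset.sum_congr rfl fun s hs => ?_
  simp only [Finset.mem_range] at hs
  rw [Finset.mul_sum]
  refine Finset.sum_nbij' (i := fun p : ℕ × ℕ => p.1) (j := fun i : ℕ => (i, s - i))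
    ?_ ?_ ?_ ?_ ?_
  · intro p hp
    simp only [Finset.mem_filter, Finset.mem_product, Finset.mem_range] at hp
    simp only [Finset.mem_Icc]
    omega
  · intro i hi
    simp only [Finset.mem_Icc] at hi
    simp only [Finset.mem_filter, Finset.mem_product, Finset.mem_range]
    omega
  · intro p hp
    simp only [Finset.mem_filter, Finset.mem_product, Finset.mem_range] at hp
    have : s - p.1 = p.2 := by omega
    simp [this]
  · intro i hi
    simp
  · intro p hp
    simp only [Finset.mem_filter, Finset.mem_product, Finset.mem_range] at hp
    have e : p.1 + p.2 = s := hp.2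
    rw [e]
    have e2 : s - p.1 = p.2 := by omega
    rw [e2]
    ring

lemma FF_pos (m n : ℕ) (hm : 1 ≤ m) (hn : 1 ≤ n) (r : ℝ) (hr : 0 < r) :
    0 < FF m n r := by
  rw [FF_fiber]
  have hterm : ∀ s ∈ range (2*n+1), 0 ≤ r^s * ∑ i ∈ Finset.Icc (s-n) (min s n),
      (cc m i * cc m (s-i)) * VV n s i := by
    intro s hs
    simp only [Finset.mem_range] at hs
    exact mul_nonneg (by positivity) (inner_nonneg m n s hm (by omega))
  have h0 : 0 < r^0 * ∑ i ∈ Finset.Icc (0-n) (min 0 n), (cc m i * cc m (0-i)) * VV n 0 i := by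
    have he : Finset.Icc (0-n) (min 0 n) = {0} := by simp
    rw [he, Finset.sum_singleton, pow_zero, one_mul]
    have hV : VV n 0 0 = (n:ℝ)*((n:ℝ)+1) := by
      unfold VV; push_cast; ring
    rw [hV]
    have hn' : (1:ℝ) ≤ (n:ℝ) := by exact_mod_cast hn
    exact mul_pos (mul_pos (cc_pos m hm 0) (cc_pos m hm (0-0))) (by nlinarith)
  calc (0:ℝ) < r^0 * ∑ i ∈ Finset.Icc (0-n) (min 0 n), (cc m i * cc m (0-i)) * VV n 0 i := h0
    _ ≤ _ := Finset.single_le_sum hterm (by simp)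

noncomputable def PP1 (m n : ℕ) (r : ℝ) : ℝ := ∑ j ∈ range (n+1), cc m j * ((j:ℝ) * r^(j-1))
noncomputable def PP2d (m n : ℕ) (r : ℝ) : ℝ :=
  ∑ j ∈ range (n+1), cc m j * ((j:ℝ) * (((j-1:ℕ):ℝ) * r^(j-1-1)))
noncomputable def gg (m n : ℕ) (r : ℝ) : ℝ := cc m n * r^(n+1) / PP m n r
noncomputable def Num1 (m n : ℕ) (r : ℝ) : ℝ :=
  cc m n * (((n:ℝ)+1) * r^n) * PP m n r - cc m n * r^(n+1) * PP1 m n r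
noncomputable def GG1 (m n : ℕ) (r : ℝ) : ℝ := Num1 m n r / (PP m n r)^2


lemma PP_pos (hm : 1 ≤ m) {r : ℝ} (hr : 0 ≤ r) : 0 < PP m n r := by
  unfold PP
  apply Finset.sum_pos'
  · intro j _
    exact mul_nonneg (cc_pos m hm j).le (pow_nonneg hr j)
  · exact ⟨0, by simp, by simpa using cc_pos m hm 0⟩

lemma PP_cont : Continuous (PP m n) := by
  unfold PP
  exact continuous_finset_sum _ fun j _ => continuous_const.mul (continuous_pow j)

lemma hasDerivAt_PP (r : ℝ) : HasDerivAt (PP m n) (PP1 m n r) r := by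
  unfold PP PP1
  exact HasDerivAt.fun_sum fun j _ => (hasDerivAt_pow j r).const_mul _

lemma hasDerivAt_PP1 (r : ℝ) : HasDerivAt (PP1 m n) (PP2d m n r) r := by
  unfold PP1 PP2d
  exact HasDerivAt.fun_sum fun j _ =>
    (((hasDerivAt_pow (j-1) r).const_mul ((j:ℝ))).const_mul _)

lemma SS1_eq (r : ℝ) : r * PP1 m n r = SS1 m n r := by
  unfold PP1 SS1
  rw [Finset.mul_sum]
  refine Finset.sum_congr rfl fun j _ => ?_
  rcases Nat.eq_zero_or_pos j with h | h
  · subst h; simp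
  · have : j - 1 + 1 = j := by omega
    calc r * (cc m j * ((j:ℝ) * r^(j-1))) = cc m j * (j:ℝ) * (r^(j-1) * r) := by ring
      _ = cc m j * (j:ℝ) * r^j := by rw [← pow_succ, this]

lemma SS2_eq (r : ℝ) : r^2 * PP2d m n r = SS2 m n r := by
  unfold PP2d SS2
  rw [Finset.mul_sum]
  refine Finset.sum_congr rfl fun j _ => ?_
  rcases Nat.lt_or_ge j 2 with h | h
  · interval_cases j
    all_goals simp
  · have e1 : ((j-1:ℕ):ℝ) = (j:ℝ) - 1 := by
      have : (1:ℕ) ≤ j := by omega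
      push_cast [Nat.cast_sub this]; ring
    have e2 : j - 1 - 1 + 2 = j := by omega
    calc r^2 * (cc m j * ((j:ℝ) * (((j-1:ℕ):ℝ) * r^(j-1-1))))
        = cc m j * ((j:ℝ) * (((j-1:ℕ):ℝ))) * (r^(j-1-1) * r^2) := by ring
      _ = cc m j * ((j:ℝ)*((j:ℝ)-1)) * r^j := by rw [← pow_add, e2, e1]

lemma hasDerivAt_gg (hm : 1 ≤ m) {r : ℝ} (hr : 0 ≤ r) :
    HasDerivAt (gg m n) (GG1 m n r) r := by
  have hnum : HasDerivAt (fun x : ℝ => cc m n * x^(n+1))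
      (cc m n * (((n:ℝ)+1) * r^n)) r := by
    have := (hasDerivAt_pow (n+1) r).const_mul (cc m n)
    convert this using 1
    rotate_left 2
    push_cast [Nat.add_sub_cancel]
    ring
    rfl
    rfl
  have h := HasDerivAt.div hnum (hasDerivAt_PP (m := m) (n := n) r) (PP_pos (m := m) (n := n) hm hr).ne'
  exact h

lemma deriv2_gg_pos (hm : 1 ≤ m) (hn : 1 ≤ n) {r : ℝ} (hr : 0 < r) :
    0 < deriv (deriv (gg m n)) r := by
  have hderiv_eq : deriv (gg m n) =ᶠ[nhds r] GG1 m n := by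
    filter_upwards [Ioi_mem_nhds hr] with x hx
    exact (hasDerivAt_gg hm (le_of_lt hx)).deriv
  rw [hderiv_eq.deriv_eq]
  -- derivative of GG1
  have h1 : HasDerivAt (fun x : ℝ => cc m n * (((n:ℝ)+1) * x^n))
      (cc m n * (((n:ℝ)+1) * ((n:ℝ) * r^(n-1)))) r := by
    have := ((hasDerivAt_pow n r).const_mul ((n:ℝ)+1)).const_mul (cc m n)
    convert this using 1
  have h2 : HasDerivAt (fun x : ℝ => cc m n * x^(n+1))
      (cc m n * (((n:ℝ)+1) * r^n)) r := by
    have := (hasDerivAt_pow (n+1) r).const_mul (cc m n)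
    convert this using 1
    rotate_left 2
    push_cast [Nat.add_sub_cancel]
    ring
    rfl
    rfl
  have hNum1 : HasDerivAt (Num1 m n)
      ((cc m n * (((n:ℝ)+1) * ((n:ℝ) * r^(n-1)))) * PP m n r
        + (cc m n * (((n:ℝ)+1) * r^n)) * PP1 m n r
        - ((cc m n * (((n:ℝ)+1) * r^n)) * PP1 m n r
            + (cc m n * r^(n+1)) * PP2d m n r)) r := by
    unfold Num1
    exact ((h1.mul (hasDerivAt_PP r)).sub (h2.mul (hasDerivAt_PP1 r)))
  have hPPsq : HasDerivAt (fun x => (PP m n x)^2) (2 * (PP m n r)^(2-1) * PP1 m n r) r :=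
    (hasDerivAt_PP r).pow 2
  set D1 := (cc m n * (((n:ℝ)+1) * ((n:ℝ) * r^(n-1)))) * PP m n r
        + (cc m n * (((n:ℝ)+1) * r^n)) * PP1 m n r
        - ((cc m n * (((n:ℝ)+1) * r^n)) * PP1 m n r
            + (cc m n * r^(n+1)) * PP2d m n r) with hD1
  have hPP := PP_pos (n := n) hm hr.le
  have hGG1 : HasDerivAt (GG1 m n)
      ((D1 * (PP m n r)^2 - Num1 m n r * (2 * (PP m n r)^(2-1) * PP1 m n r)) / ((PP m n r)^2)^2) r := by
    unfold GG1
    exact hNum1.div hPPsq (by positivity)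
  rw [hGG1.deriv]
  -- positivity of the value
  have hE : 0 < D1 * PP m n r - 2 * PP1 m n r * Num1 m n r := by
    have key : r^2 * (D1 * PP m n r - 2 * PP1 m n r * Num1 m n r)
        = cc m n * r^(n+1) * FF m n r := by
      have en : r^n = r^(n-1) * r := by
        rw [← pow_succ]; congr 1; omega
      have en1 : r^(n+1) = r^(n-1) * r * r := by
        rw [mul_assoc, ← sq, ← pow_add]; congr 1; omega
      have hs1 := SS1_eq (m := m) (n := n) r
      have hs2 := SS2_eq (m := m) (n := n) r
      unfold FF
      rw [← hs1, ← hs2, hD1]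
      unfold Num1
      rw [en, en1]
      ring
    have hFF := FF_pos m n hm hn r hr
    have hcc := cc_pos m hm n
    nlinarith [pow_pos hr 2, pow_pos hr (n+1), mul_pos (mul_pos hcc (pow_pos hr (n+1))) hFF]
    -- fallback
  have : (D1 * (PP m n r)^2 - Num1 m n r * (2 * (PP m n r)^(2-1) * PP1 m n r)) / ((PP m n r)^2)^2
      = (D1 * PP m n r - 2 * PP1 m n r * Num1 m n r) / (PP m n r)^3 := by
    field_simp
    ring
  rw [this]
  positivity

lemma gg_contOn (hm : 1 ≤ m) : ContinuousOn (gg m n) (Set.Ici 0) := by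
  unfold gg
  exact ContinuousOn.div (continuous_const.mul (continuous_pow (n+1))).continuousOn
    PP_cont.continuousOn (fun x hx => (PP_pos hm hx).ne')

lemma gg_strictConvexOn (hm : 1 ≤ m) (hn : 1 ≤ n) :
    StrictConvexOn ℝ (Set.Ici 0) (gg m n) := by
  apply strictConvexOn_of_deriv2_pos (convex_Ici 0) (gg_contOn hm)
  intro x hx
  rw [interior_Ici] at hx
  have : deriv^[2] (gg m n) x = deriv (deriv (gg m n)) x := by
    simp [Function.iterate_succ, Function.iterate_one]
  rw [this]
  exact deriv2_gg_pos hm hn hx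

-- transfer: for μ > 0, t ≥ 0: t * Bmn m n (t/μ) = μ * gg m n (t/μ)
lemma Bmn_eq (r : ℝ) : Bmn m n r = cc m n * r^n / PP m n r := by
  unfold Bmn PP
  rw [aCoef_eq]
  congr 1
  exact Finset.sum_congr rfl fun j _ => aCoef_eq m j r

lemma phi_eq {μ t : ℝ} (hμ' : 0 < μ) (ht : 0 < t) :
    t * Bmn m n (t/μ) = μ * gg m n (t/μ) := by
  rw [Bmn_eq]
  unfold gg
  rw [pow_succ]
  have h1 : μ * (t/μ) = t := by field_simp
  calc t * (cc m n * (t/μ)^n / PP m n (t/μ))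
      = (μ * (t/μ)) * (cc m n * (t/μ)^n / PP m n (t/μ)) := by rw [h1]
    _ = μ * (cc m n * ((t/μ)^n * (t/μ)) / PP m n (t/μ)) := by ring

lemma gg_zero : gg m n 0 = 0 := by
  unfold gg
  simp

open Finset Set

theorem stmt_5 (K : ℕ) (hK : 1 ≤ K) (lam : ℝ) (hlam : 0 < lam)
    (m n : Fin K → ℕ) (μ : Fin K → ℝ)
    (hm : ∀ k, 1 ≤ m k) (hn : ∀ k, m k ≤ n k) (hμ : ∀ k, 0 < μ k)
    (φ : Fin K → ℝ → ℝ) (hφ0 : ∀ k, φ k 0 = 0)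
    (hφ : ∀ k, ∀ t : ℝ, 0 < t → φ k t = t * Bmn (m k) (n k) (t / μ k)) :
    ∃! v : Fin K → ℝ,
      ((∀ k, v k ∈ Set.Icc (0 : ℝ) lam) ∧ ∑ k, v k = lam) ∧
      ∀ w : Fin K → ℝ, ((∀ k, w k ∈ Set.Icc (0 : ℝ) lam) ∧ ∑ k, w k = lam) →
        ∑ k, φ k (v k) ≤ ∑ k, φ k (w k) := by
  -- the nice representative functions
  set ψ : Fin K → ℝ → ℝ := fun k t => μ k * gg (m k) (n k) (t / μ k) with hψ
  have hφψ : ∀ k, ∀ t : ℝ, 0 ≤ t → φ k t = ψ k t := by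
    intro k t ht
    rcases eq_or_lt_of_le ht with h | h
    · rw [← h, hφ0 k, hψ]
      simp [gg_zero]
    · rw [hφ k t h, hψ]
      exact phi_eq (hμ k) h
  have hnk : ∀ k, 1 ≤ n k := fun k => le_trans (hm k) (hn k)
  -- ψ k is continuous on Ici 0
  have hψcont : ∀ k, ContinuousOn (ψ k) (Set.Ici 0) := by
    intro k
    apply ContinuousOn.mul continuousOn_const
    apply ContinuousOn.comp (gg_contOn (hm k)) (ContinuousOn.div continuousOn_id continuousOn_const (fun x _ => (hμ k).ne'))
    intro x hx
    exact Set.mem_Ici.mpr (div_nonneg hx (hμ k).le)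
  -- ψ k is strictly convex on Ici 0
  have hψconv : ∀ k, StrictConvexOn ℝ (Set.Ici 0) (ψ k) := by
    intro k
    constructor
    · exact convex_Ici 0
    · intro x hx y hy hxy a b ha hb hab
      have hx' : x / μ k ∈ Set.Ici (0:ℝ) := Set.mem_Ici.mpr (div_nonneg hx (hμ k).le)
      have hy' : y / μ k ∈ Set.Ici (0:ℝ) := Set.mem_Ici.mpr (div_nonneg hy (hμ k).le)
      have hxy' : x / μ k ≠ y / μ k := by
        intro h
        apply hxy
        have h2 := congrArg (fun z => z * μ k) h
        simpa [div_mul_cancel₀, (hμ k).ne'] using h2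
      have := (gg_strictConvexOn (hm k) (hnk k)).2 hx' hy' hxy' ha hb hab
      have harg : (a • x + b • y) / μ k = a • (x / μ k) + b • (y / μ k) := by
        simp only [smul_eq_mul]
        ring
      rw [hψ]
      simp only [smul_eq_mul] at *
      rw [harg]
      calc μ k * gg (m k) (n k) (a * (x / μ k) + b * (y / μ k))
          < μ k * (a * gg (m k) (n k) (x / μ k) + b * gg (m k) (n k) (y / μ k)) := by
            exact (mul_lt_mul_iff_right₀ (hμ k)).mpr this
        _ = a * (μ k * gg (m k) (n k) (x / μ k)) + b * (μ k * gg (m k) (n k) (y / μ k)) := by ring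
  -- feasible set
  set C : Set (Fin K → ℝ) := {v | (∀ k, v k ∈ Set.Icc (0:ℝ) lam) ∧ ∑ k, v k = lam} with hC
  have hCeq : C = (Set.pi Set.univ fun _ => Set.Icc (0:ℝ) lam) ∩ {v | ∑ k, v k = lam} := by
    ext v
    simp only [hC, Set.mem_setOf_eq, Set.mem_inter_iff, Set.mem_pi, Set.mem_univ, true_implies]
  have hCcompact : IsCompact C := by
    rw [hCeq]
    apply IsCompact.inter_right (isCompact_univ_pi fun _ => isCompact_Icc)
    exact isClosed_eq (continuous_finset_sum _ fun k _ => continuous_apply k) continuous_const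
  have hCne : C.Nonempty := by
    refine ⟨fun _ => lam / K, ?_, ?_⟩
    · intro k
      constructor
      · positivity
      · rw [div_le_iff₀ (by exact_mod_cast hK : (0:ℝ) < K)]
        nlinarith [show (1:ℝ) ≤ K by exact_mod_cast hK]
    · rw [Finset.sum_const, Finset.card_univ, Fintype.card_fin, nsmul_eq_mul]
      field_simp
  -- objective continuous on C
  have hmemIcc : ∀ v ∈ C, ∀ k, v k ∈ Set.Icc (0:ℝ) lam := fun v hv => hv.1
  have hΦcont : ContinuousOn (fun v : Fin K → ℝ => ∑ k, φ k (v k)) C := by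
    apply continuousOn_finset_sum
    intro k _
    have : ContinuousOn (fun v : Fin K → ℝ => ψ k (v k)) C := by
      apply ContinuousOn.comp (hψcont k) (continuous_apply k).continuousOn
      intro v hv
      exact (hv.1 k).1
    apply this.congr
    intro v hv
    exact hφψ k (v k) (hv.1 k).1
  -- existence of minimizer
  obtain ⟨v, hvC, hvmin⟩ := hCcompact.exists_isMinOn hCne hΦcont
  have hvmin' : ∀ w ∈ C, ∑ k, φ k (v k) ≤ ∑ k, φ k (w k) := fun w hw => hvmin hw
  refine ⟨v, ⟨⟨hvC.1, hvC.2⟩, fun w hw => hvmin' w hw⟩, ?_⟩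
  -- uniqueness
  rintro u ⟨huC, humin⟩
  have huC' : u ∈ C := huC
  by_contra hne
  -- midpoint
  set z : Fin K → ℝ := fun k => (u k + v k) / 2 with hz
  have hzk : ∀ k, z k = (u k + v k) / 2 := fun k => rfl
  have hzC : z ∈ C := by
    constructor
    · intro k
      have h1 := (huC'.1 k)
      have h2 := (hvC.1 k)
      simp only [Set.mem_Icc] at h1 h2 ⊢
      rw [hzk]
      constructor
      · linarith [h1.1, h2.1]
      · linarith [h1.2, h2.2]
    · have : ∑ k, z k = (∑ k, u k + ∑ k, v k) / 2 := by
        rw [← Finset.sum_add_distrib, ← Finset.sum_div]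
      rw [this, huC'.2, hvC.2]
      ring
  -- strict inequality at some coordinate
  obtain ⟨k0, hk0⟩ : ∃ k, u k ≠ v k := by
    by_contra hc
    push_neg at hc
    exact hne (funext hc)
  have hval : ∑ k, φ k (u k) = ∑ k, φ k (v k) :=
    le_antisymm (humin v ⟨hvC.1, hvC.2⟩) (hvmin' u huC')
  have hstrict : ∑ k, φ k (z k) < ∑ k, φ k (v k) := by
    have hterm : ∀ k, φ k (z k) ≤ (φ k (u k) + φ k (v k)) / 2 := by
      intro k
      have hu0 := (huC'.1 k).1
      have hv0 := (hvC.1 k).1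
      have hz0 : 0 ≤ z k := by rw [hzk]; linarith
      rw [hφψ k _ hz0, hφψ k _ hu0, hφψ k _ hv0]
      have := ((hψconv k).convexOn).2 (Set.mem_Ici.mpr hu0) (Set.mem_Ici.mpr hv0)
        (by norm_num : (0:ℝ) ≤ 1/2) (by norm_num : (0:ℝ) ≤ 1/2) (by norm_num)
      simp only [smul_eq_mul] at this
      calc ψ k (z k) = ψ k (1/2 * u k + 1/2 * v k) := by rw [hzk]; congr 1; ring
        _ ≤ 1/2 * ψ k (u k) + 1/2 * ψ k (v k) := this
        _ = (ψ k (u k) + ψ k (v k)) / 2 := by ring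
    have hterm0 : φ k0 (z k0) < (φ k0 (u k0) + φ k0 (v k0)) / 2 := by
      have hu0 := (huC'.1 k0).1
      have hv0 := (hvC.1 k0).1
      have hz0 : 0 ≤ z k0 := by rw [hzk]; linarith
      rw [hφψ k0 _ hz0, hφψ k0 _ hu0, hφψ k0 _ hv0]
      have := (hψconv k0).2 (Set.mem_Ici.mpr hu0) (Set.mem_Ici.mpr hv0) hk0
        (by norm_num : (0:ℝ) < 1/2) (by norm_num : (0:ℝ) < 1/2) (by norm_num)
      simp only [smul_eq_mul] at this
      calc ψ k0 (z k0) = ψ k0 (1/2 * u k0 + 1/2 * v k0) := by rw [hzk]; congr 1; ring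
        _ < 1/2 * ψ k0 (u k0) + 1/2 * ψ k0 (v k0) := this
        _ = (ψ k0 (u k0) + ψ k0 (v k0)) / 2 := by ring
    calc ∑ k, φ k (z k) < ∑ k, (φ k (u k) + φ k (v k)) / 2 := by
          apply Finset.sum_lt_sum (fun k _ => hterm k) ⟨k0, Finset.mem_univ k0, hterm0⟩
      _ = (∑ k, φ k (u k) + ∑ k, φ k (v k)) / 2 := by
          rw [← Finset.sum_add_distrib, ← Finset.sum_div]
      _ = ∑ k, φ k (v k) := by rw [hval]; ring
  exact absurd (hvmin' z hzC) (not_le.mpr hstrict)
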